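/- Let a_1, …, a_k, b, r be positive integers. If r divides a_i for some 1 ≤ i ≤ k, then the polynomial [a_1]_q · [a_2]_q ⋯ [a_k]_q · [b]_{q^r} is symmetric and unimodal. -/

import Mathlib

open Polynomial

/-- The q-analog `[n]_q = 1 + q + ⋯ + q^(n-1)` as a polynomial in `ℤ[q]`. -/
noncomputable def qAnalog (n : ℕ) : Polynomial ℤ :=
  ∑ i ∈ Finset.range n, X ^ i

/-- The q-analog `[n]_{q^r} = 1 + q^r + ⋯ + q^(r(n-1))` as a polynomial in `ℤ[q]`. -/
noncomputable def qAnalogPow (n r : ℕ) : Polynomial ℤ :=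
  ∑ i ∈ Finset.range n, X ^ (r * i)

/-- A polynomial of degree `d` is symmetric if `c_k = c_{d-k}` for all `0 ≤ k ≤ d`. -/
def IsSymmPoly (P : Polynomial ℤ) : Prop :=
  ∀ k ≤ P.natDegree, P.coeff k = P.coeff (P.natDegree - k)

/-- A polynomial is unimodal if its coefficient sequence increases up to some
index `M` and decreases afterwards. -/
def IsUnimodalPoly (P : Polynomial ℤ) : Prop :=
  ∃ M : ℕ, (∀ k, k < M → P.coeff k ≤ P.coeff (k + 1)) ∧
    (∀ k, M ≤ k → P.coeff (k + 1) ≤ P.coeff k)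

structure NiceZ (d : ℤ) (c : ℤ → ℤ) : Prop where
  nonneg : ∀ z, 0 ≤ c z
  neg : ∀ z, z < 0 → c z = 0
  symm : ∀ i j, i + j = d → c i = c j
  mono : ∀ i j, i ≤ j → i + j ≤ d → c i ≤ c j

lemma niceZ_of_step (d : ℤ) (c : ℤ → ℤ)
    (h0 : ∀ z, 0 ≤ c z) (hneg : ∀ z, z < 0 → c z = 0)
    (hsymm : ∀ i j, i + j = d → c i = c j)
    (hstep : ∀ z, 2*z + 1 ≤ d → c z ≤ c (z+1)) : NiceZ d c := by
  have half : ∀ i j : ℤ, i ≤ j → 2*j ≤ d → c i ≤ c j := by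
    intro i j hij
    refine Int.le_induction (motive := fun j _ => 2*j ≤ d → c i ≤ c j) (fun _ => le_rfl) ?_ j hij
    intro n _ ih h2
    exact le_trans (ih (by linarith)) (hstep n (by linarith))
  refine ⟨h0, hneg, hsymm, ?_⟩
  intro i j hij hsum
  by_cases h : 2*j ≤ d
  · exact half i j hij h
  · push_neg at h
    have e : c (d - j) = c j := hsymm (d - j) j (by ring)
    rw [← e]
    exact half i (d - j) (by linarith) (by linarith)

lemma ediv_spec (r q u : ℤ) (hr : 0 < r) (hu : 0 ≤ u) (hu2 : u < r) :
    (r * q + u) / r = q := by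
  rw [add_comm, Int.add_mul_ediv_left _ _ (by omega : r ≠ 0),
    Int.ediv_eq_zero_of_lt hu hu2, zero_add]


lemma NiceZ.window {d : ℤ} {c : ℤ → ℤ} (h : NiceZ d c) (n : ℕ) (hn : 1 ≤ n) :
    NiceZ (d + n - 1) (fun z => ∑ i ∈ Finset.range n, c (z - i)) := by
  apply niceZ_of_step
  · intro z; exact Finset.sum_nonneg fun i _ => h.nonneg _
  · intro z hz
    exact Finset.sum_eq_zero fun i _ => h.neg _ (by
      have : (0:ℤ) ≤ i := Int.natCast_nonneg i
      linarith)
  · intro y y' hyy'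
    calc ∑ i ∈ Finset.range n, c (y - i)
        = ∑ i ∈ Finset.range n, c (y - (n - 1 - i : ℕ)) := (Finset.sum_range_reflect _ n).symm
      _ = ∑ i ∈ Finset.range n, c (y' - i) := by
          apply Finset.sum_congr rfl
          intro i hi
          rw [Finset.mem_range] at hi
          apply h.symm
          have : ((n - 1 - i : ℕ) : ℤ) = (n:ℤ) - 1 - i := by omega
          rw [this]; linarith
  · intro z hz
    obtain ⟨m, rfl⟩ : ∃ m, n = m + 1 := ⟨n - 1, by omega⟩
    show ∑ i ∈ Finset.range (m+1), c (z - i) ≤ ∑ i ∈ Finset.range (m+1), c (z + 1 - i)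
    rw [Finset.sum_range_succ (fun i => c (z - i)) m,
        Finset.sum_range_succ' (fun i => c (z + 1 - i)) m]
    have e : ∀ i ∈ Finset.range m, c (z + 1 - ((i:ℕ)+1 : ℕ)) = c (z - i) := by
      intro i _; congr 1; push_cast; ring
    rw [Finset.sum_congr rfl e]
    have hle : c (z - m) ≤ c (z + 1 - ((0:ℕ):ℤ)) := by
      push_cast
      apply h.mono _ _ (by linarith [Int.natCast_nonneg m]) (by push_cast at hz; linarith)
    push_cast at hle ⊢
    linarith

lemma NiceZ.stretch {d : ℤ} {c : ℤ → ℤ} (h : NiceZ d c) (r : ℕ) (hr : 1 ≤ r) :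
    NiceZ (r * (d + 1) - 1) (fun z => c (z / r)) := by
  have hr' : (0:ℤ) < r := by exact_mod_cast hr
  apply niceZ_of_step
  · intro z; exact h.nonneg _
  · intro z hz; exact h.neg _ (Int.ediv_neg_of_neg_of_pos hz hr')
  · intro i j hij
    set q := i / r with hq
    set u := i % r with hu
    have hiu : i = r * q + u := by rw [hq, hu]; linarith [Int.mul_ediv_add_emod i r]
    have hu0 : 0 ≤ u := Int.emod_nonneg i (by omega)
    have hur : u < r := Int.emod_lt_of_pos i hr'
    have hj : j = r * (d - q) + (r - 1 - u) := by linarith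
    show c (i / r) = c (j / r)
    rw [hj, ediv_spec r (d - q) (r - 1 - u) hr' (by omega) (by omega), ← hq]
    exact h.symm q (d - q) (by ring)
  · intro z hz
    show c (z / r) ≤ c ((z+1) / r)
    have h1 : r * (z / r) ≤ z := by
      have := Int.mul_ediv_add_emod z r
      have := Int.emod_nonneg z (show (r:ℤ) ≠ 0 by omega)
      linarith
    have h2 : r * ((z+1) / r) ≤ z + 1 := by
      have := Int.mul_ediv_add_emod (z+1) r
      have := Int.emod_nonneg (z+1) (show (r:ℤ) ≠ 0 by omega)
      linarith
    apply h.mono _ _ (Int.ediv_le_ediv hr' (by linarith))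
    have : r * (z / r + (z+1) / r) < r * (d + 1) := by
      rw [mul_add]; linarith
    have := lt_of_mul_lt_mul_left this (by positivity : (0:ℤ) ≤ r)
    linarith

noncomputable def pz (P : Polynomial ℤ) (z : ℤ) : ℤ := if 0 ≤ z then P.coeff z.toNat else 0

lemma qAnalog_coeff (n k : ℕ) : (qAnalog n).coeff k = if k < n then 1 else 0 := by
  simp [qAnalog, Polynomial.coeff_X_pow, Finset.sum_ite_eq]

lemma pz_qAnalog (n : ℕ) (z : ℤ) :
    pz (qAnalog n) z = if 0 ≤ z ∧ z < n then 1 else 0 := by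
  unfold pz
  split_ifs with h1 h2 h3 <;> try rfl
  · rw [qAnalog_coeff]; split_ifs with h4 <;> omega
  · rw [qAnalog_coeff]; split_ifs with h4 <;> omega
  · omega

lemma pz_mul_qAnalog (P : Polynomial ℤ) (n : ℕ) (z : ℤ) :
    pz (P * qAnalog n) z = ∑ i ∈ Finset.range n, pz P (z - i) := by
  by_cases hz : 0 ≤ z
  · unfold qAnalog
    rw [Finset.mul_sum]
    unfold pz
    rw [if_pos hz, Polynomial.finset_sum_coeff]
    apply Finset.sum_congr rfl
    intro i _
    rw [Polynomial.coeff_mul_X_pow']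
    split_ifs with h1 h2 h3
    · congr 1; omega
    · omega
    · omega
    · rfl
  · unfold pz
    rw [if_neg hz, Finset.sum_eq_zero]
    intro i _
    rw [if_neg (by have := Int.natCast_nonneg i; omega)]

lemma qAnalog_add (s t : ℕ) : qAnalog (s + t) = qAnalog s + X ^ s * qAnalog t := by
  ext k
  rw [Polynomial.coeff_add, qAnalog_coeff, qAnalog_coeff, mul_comm,
    Polynomial.coeff_mul_X_pow']
  split_ifs with h1 h2 h3 h4 h5 <;> first | omega | (rw [qAnalog_coeff]; split_ifs with h6 <;> omega) | rfl
  all_goals (rw [qAnalog_coeff]; split_ifs <;> omega)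

lemma qAnalogPow_succ (m r : ℕ) :
    qAnalogPow (m+1) r = qAnalogPow m r + X ^ (r * m) := by
  rw [qAnalogPow, Finset.sum_range_succ, qAnalogPow]

lemma qAnalog_mul_eq (r m : ℕ) : qAnalog (r * m) = qAnalog r * qAnalogPow m r := by
  induction m with
  | zero => simp [qAnalog, qAnalogPow]
  | succ m ih =>
    have h : r * (m + 1) = r * m + r := by ring
    rw [h, qAnalog_add, ih, qAnalogPow_succ, mul_add]
    ring

-- coeff of product of two qAnalogPow
lemma coeff_pp (m b r k : ℕ) :
    (qAnalogPow m r * qAnalogPow b r).coeff k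
      = ∑ i ∈ Finset.range m, ∑ j ∈ Finset.range b, if k = r*i + r*j then 1 else 0 := by
  rw [qAnalogPow, qAnalogPow, Finset.sum_mul_sum]
  rw [Polynomial.finset_sum_coeff]
  apply Finset.sum_congr rfl
  intro i _
  rw [Polynomial.finset_sum_coeff]
  apply Finset.sum_congr rfl
  intro j _
  rw [← pow_add, Polynomial.coeff_X_pow]

lemma coeff_aa (m b t : ℕ) :
    (qAnalog m * qAnalog b).coeff t
      = ∑ i ∈ Finset.range m, ∑ j ∈ Finset.range b, if t = i + j then 1 else 0 := by
  rw [qAnalog, qAnalog, Finset.sum_mul_sum, Polynomial.finset_sum_coeff]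
  apply Finset.sum_congr rfl
  intro i _
  rw [Polynomial.finset_sum_coeff]
  apply Finset.sum_congr rfl
  intro j _
  rw [← pow_add, Polynomial.coeff_X_pow]

lemma pz_pp (m b r : ℕ) (hr : 1 ≤ r) (w : ℤ) :
    pz (qAnalogPow m r * qAnalogPow b r) w
      = if (r:ℤ) ∣ w then pz (qAnalog m * qAnalog b) (w / r) else 0 := by
  have hr' : (0:ℤ) < r := by exact_mod_cast hr
  by_cases hw : 0 ≤ w
  · by_cases hd : (r:ℤ) ∣ w
    · obtain ⟨t, ht⟩ := hd
      have ht0 : 0 ≤ t := nonneg_of_mul_nonneg_right (ht ▸ hw) hr'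
      rw [if_pos ⟨t, ht⟩]
      have hwr : w / (r:ℤ) = t := by rw [ht, Int.mul_ediv_cancel_left _ (by omega)]
      rw [hwr]
      unfold pz
      rw [if_pos hw, if_pos ht0, coeff_pp, coeff_aa]
      apply Finset.sum_congr rfl; intro i _
      apply Finset.sum_congr rfl; intro j _
      have hw' : ((w.toNat : ℤ)) = w := Int.toNat_of_nonneg hw
      have ht' : ((t.toNat : ℤ)) = t := Int.toNat_of_nonneg ht0
      apply if_congr _ rfl rfl
      constructor
      · intro h
        have h1 : w = (r:ℤ)*i + r*j := by rw [← hw']; exact_mod_cast congrArg (Nat.cast : ℕ → ℤ) h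
        have h2 : (r:ℤ) * t = r * ((i:ℤ) + j) := by rw [← ht, h1]; ring
        have h3 : t = (i:ℤ) + j := mul_left_cancel₀ (by omega : (r:ℤ) ≠ 0) h2
        omega
      · intro h
        have h3 : t = (i:ℤ) + j := by omega
        have h1 : w = (r:ℤ)*i + r*j := by rw [ht, h3]; ring
        have : ((w.toNat : ℤ)) = ((r*i + r*j : ℕ) : ℤ) := by rw [hw', h1]; push_cast; ring
        exact_mod_cast this
    · rw [if_neg hd]
      unfold pz
      rw [if_pos hw, coeff_pp, Finset.sum_eq_zero]
      intro i _
      rw [Finset.sum_eq_zero]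
      intro j _
      rw [if_neg]
      intro h
      refine hd ⟨(i:ℤ) + j, ?_⟩
      have hw' : ((w.toNat : ℤ)) = w := Int.toNat_of_nonneg hw
      have : ((w.toNat : ℤ)) = ((r*i + r*j : ℕ) : ℤ) := by exact_mod_cast congrArg (Nat.cast : ℕ → ℤ) h
      rw [hw'] at this
      rw [this]; push_cast; ring
  · unfold pz
    rw [if_neg hw]
    split_ifs with hd h2
    · exact absurd h2 (not_le.mpr (Int.ediv_neg_of_neg_of_pos (by omega) hr'))
    · rfl
    · rfl

lemma pz_collapse (m b r : ℕ) (hr : 1 ≤ r) (z : ℤ) :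
    pz (qAnalog (r*m) * qAnalogPow b r) z = pz (qAnalog m * qAnalog b) (z / r) := by
  have hr' : (0:ℤ) < r := by exact_mod_cast hr
  have hre : qAnalog (r*m) * qAnalogPow b r
      = (qAnalogPow m r * qAnalogPow b r) * qAnalog r := by
    rw [qAnalog_mul_eq]; ring
  rw [hre, pz_mul_qAnalog]
  have h1 : 0 ≤ z % r := Int.emod_nonneg z (by omega)
  have h2 : z % r < r := Int.emod_lt_of_pos z hr'
  have hmem : (z % r).toNat ∈ Finset.range r := by rw [Finset.mem_range]; omega
  rw [Finset.sum_eq_single_of_mem _ hmem]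
  · have hc : ((( z % r).toNat : ℤ)) = z % r := Int.toNat_of_nonneg h1
    rw [pz_pp m b r hr]
    have hzz : z - ((z % r).toNat : ℤ) = (r:ℤ) * (z / r) := by
      rw [hc]
      have := Int.mul_ediv_add_emod z r
      linarith
    rw [hzz, if_pos ⟨z / r, rfl⟩, Int.mul_ediv_cancel_left _ (by omega : (r:ℤ) ≠ 0)]
  · intro i hi hne
    rw [Finset.mem_range] at hi
    rw [pz_pp m b r hr, if_neg]
    rintro ⟨u, hu⟩
    have hz : z = (r:ℤ)*u + i := by linarith
    have : z % r = i := by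
      rw [hz, add_comm, Int.add_mul_emod_self_left, Int.emod_eq_of_lt (by positivity) (by exact_mod_cast hi)]
    exact hne (by omega)

lemma niceZ_qAnalog (n : ℕ) : NiceZ ((n:ℤ) - 1) (pz (qAnalog n)) := by
  constructor
  · intro z; rw [pz_qAnalog]; split_ifs <;> norm_num
  · intro z hz; rw [pz_qAnalog, if_neg (by omega)]
  · intro i j hij; rw [pz_qAnalog, pz_qAnalog]; split_ifs <;> omega
  · intro i j hij hsum; rw [pz_qAnalog, pz_qAnalog]; split_ifs <;> omega

lemma niceZ_mul_qAnalog {d : ℤ} {P : Polynomial ℤ} (h : NiceZ d (pz P)) (n : ℕ) (hn : 1 ≤ n) :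
    NiceZ (d + n - 1) (pz (P * qAnalog n)) := by
  have e : pz (P * qAnalog n) = fun z => ∑ i ∈ Finset.range n, pz P (z - i) :=
    funext fun z => pz_mul_qAnalog P n z
  rw [e]
  exact h.window n hn

lemma base_nice (m b r : ℕ) (hm : 1 ≤ m) (hb : 1 ≤ b) (hr : 1 ≤ r) :
    NiceZ ((r:ℤ) * ((m:ℤ) + b - 1) - 1) (pz (qAnalog (r*m) * qAnalogPow b r)) := by
  have h1 : NiceZ ((m:ℤ) - 1 + b - 1) (pz (qAnalog m * qAnalog b)) :=
    niceZ_mul_qAnalog (niceZ_qAnalog m) b hb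
  have h2 := h1.stretch r hr
  have e : pz (qAnalog (r*m) * qAnalogPow b r)
      = fun z => pz (qAnalog m * qAnalog b) (z / r) := funext fun z => pz_collapse m b r hr z
  rw [e]
  convert h2 using 1
  ring

lemma qAnalogPow_coeff (b r k : ℕ) :
    (qAnalogPow b r).coeff k = ∑ i ∈ Finset.range b, if k = r * i then 1 else 0 := by
  rw [qAnalogPow, Polynomial.finset_sum_coeff]
  exact Finset.sum_congr rfl fun i _ => Polynomial.coeff_X_pow _ _

lemma natDegree_qAnalog (n : ℕ) (hn : 1 ≤ n) : (qAnalog n).natDegree = n - 1 := by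
  apply le_antisymm
  · rw [Polynomial.natDegree_le_iff_coeff_eq_zero]
    intro N hN
    rw [qAnalog_coeff, if_neg (by omega)]
  · apply Polynomial.le_natDegree_of_ne_zero
    rw [qAnalog_coeff, if_pos (by omega)]
    norm_num

lemma monic_qAnalog (n : ℕ) (hn : 1 ≤ n) : (qAnalog n).Monic := by
  unfold Polynomial.Monic Polynomial.leadingCoeff
  rw [natDegree_qAnalog n hn, qAnalog_coeff, if_pos (by omega)]

lemma coeff_qAnalogPow_top (b r : ℕ) (hb : 1 ≤ b) (hr : 1 ≤ r) :
    (qAnalogPow b r).coeff (r * (b-1)) = 1 := by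
  rw [qAnalogPow_coeff, Finset.sum_eq_single_of_mem (b-1) (by rw [Finset.mem_range]; omega)]
  · rw [if_pos rfl]
  · intro i hi hne
    rw [Finset.mem_range] at hi
    rw [if_neg]
    intro h
    exact hne (Nat.eq_of_mul_eq_mul_left (by omega) h.symm)

lemma natDegree_qAnalogPow (b r : ℕ) (hb : 1 ≤ b) (hr : 1 ≤ r) :
    (qAnalogPow b r).natDegree = r * (b - 1) := by
  apply le_antisymm
  · rw [Polynomial.natDegree_le_iff_coeff_eq_zero]
    intro N hN
    rw [qAnalogPow_coeff, Finset.sum_eq_zero]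
    intro i hi
    rw [Finset.mem_range] at hi
    rw [if_neg]
    have : r * i ≤ r * (b - 1) := Nat.mul_le_mul_left r (by omega)
    omega
  · apply Polynomial.le_natDegree_of_ne_zero
    rw [coeff_qAnalogPow_top b r hb hr]
    norm_num

lemma monic_qAnalogPow (b r : ℕ) (hb : 1 ≤ b) (hr : 1 ≤ r) : (qAnalogPow b r).Monic := by
  unfold Polynomial.Monic Polynomial.leadingCoeff
  rw [natDegree_qAnalogPow b r hb hr, coeff_qAnalogPow_top b r hb hr]

lemma pz_natCast (P : Polynomial ℤ) (k : ℕ) : pz P (k : ℤ) = P.coeff k := by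
  simp [pz]

lemma final_wrap {P : Polynomial ℤ} {N : ℕ} (hdeg : P.natDegree = N)
    (h : NiceZ (N : ℤ) (pz P)) : IsSymmPoly P ∧ IsUnimodalPoly P := by
  constructor
  · intro k hk
    rw [hdeg] at hk ⊢
    rw [← pz_natCast, ← pz_natCast]
    have e : ((N - k : ℕ) : ℤ) = (N : ℤ) - k := by omega
    rw [e]
    exact h.symm _ _ (by ring)
  · refine ⟨(N + 1) / 2, ?_, ?_⟩
    · intro k hk
      rw [← pz_natCast, ← pz_natCast]
      have e : ((k + 1 : ℕ) : ℤ) = (k : ℤ) + 1 := by push_cast; ring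
      rw [e]
      exact h.mono k (k + 1) (by omega) (by omega)
    · intro k hk
      rw [← pz_natCast, ← pz_natCast]
      have e : ((k + 1 : ℕ) : ℤ) = (k : ℤ) + 1 := by push_cast; ring
      rw [e]
      have e1 : pz P ((k : ℤ) + 1) = pz P ((N : ℤ) - (k + 1)) := h.symm _ _ (by ring)
      rw [e1]
      exact h.mono _ _ (by omega) (by omega)

lemma prod_nice {P0 : Polynomial ℤ} {D0 : ℤ} (h0 : NiceZ D0 (pz P0)) {k : ℕ}
    (a : Fin k → ℕ) (ha : ∀ i, 1 ≤ a i) (s : Finset (Fin k)) :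
    NiceZ (D0 + ∑ i ∈ s, ((a i : ℤ) - 1)) (pz (P0 * ∏ i ∈ s, qAnalog (a i))) := by
  induction s using Finset.induction_on with
  | empty => simpa using h0
  | @insert j s hj ih =>
    have hd : D0 + ∑ i ∈ insert j s, ((a i : ℤ) - 1)
        = (D0 + ∑ i ∈ s, ((a i : ℤ) - 1)) + (a j : ℤ) - 1 := by
      rw [Finset.sum_insert hj]; ring
    have e : P0 * ∏ i ∈ insert j s, qAnalog (a i)
        = (P0 * ∏ i ∈ s, qAnalog (a i)) * qAnalog (a j) := by
      rw [Finset.prod_insert hj]; ring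
    rw [hd, e]
    exact niceZ_mul_qAnalog ih (a j) (ha j)

theorem prod_qAnalogs_mul_qAnalogPow_symm_unimodal (k : ℕ) (hk : 1 ≤ k)
    (a : Fin k → ℕ) (b r : ℕ) (ha : ∀ i, 1 ≤ a i) (hb : 1 ≤ b) (hr : 1 ≤ r)
    (hdvd : ∃ i, r ∣ a i) :
    IsSymmPoly ((∏ i, qAnalog (a i)) * qAnalogPow b r) ∧
    IsUnimodalPoly ((∏ i, qAnalog (a i)) * qAnalogPow b r) := by
  obtain ⟨i0, m, hm⟩ := hdvd
  have hm1 : 1 ≤ m := by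
    rcases Nat.eq_zero_or_pos m with h | h
    · exfalso; have := ha i0; rw [h, Nat.mul_zero] at hm; omega
    · exact h
  have hbase := base_nice m b r hm1 hb hr
  have hprod := prod_nice hbase a ha (Finset.univ.erase i0)
  have hP : (∏ i, qAnalog (a i)) * qAnalogPow b r
      = (qAnalog (r*m) * qAnalogPow b r) * ∏ i ∈ Finset.univ.erase i0, qAnalog (a i) := by
    rw [← Finset.mul_prod_erase Finset.univ (fun i => qAnalog (a i)) (Finset.mem_univ i0), hm]
    ring
  have hQm : (∏ i, qAnalog (a i)).Monic :=
    Polynomial.monic_prod_of_monic _ _ fun i _ => monic_qAnalog (a i) (ha i)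
  have hdeg : ((∏ i, qAnalog (a i)) * qAnalogPow b r).natDegree
      = (∑ i, (a i - 1)) + r * (b-1) := by
    rw [Polynomial.Monic.natDegree_mul hQm (monic_qAnalogPow b r hb hr),
      natDegree_qAnalogPow b r hb hr, Polynomial.natDegree_prod _ _
        (fun i _ => (monic_qAnalog (a i) (ha i)).ne_zero)]
    congr 1
    exact Finset.sum_congr rfl fun i _ => natDegree_qAnalog _ (ha i)
  refine final_wrap hdeg ?_
  have hcast : ((((∑ i, (a i - 1)) + r * (b-1) : ℕ)) : ℤ)
      = ((r:ℤ) * ((m:ℤ) + b - 1) - 1) + ∑ i ∈ Finset.univ.erase i0, ((a i : ℤ) - 1) := by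
    have e1 : (((∑ i, (a i - 1) : ℕ)) : ℤ) = ∑ i, ((a i : ℤ) - 1) := by
      rw [Nat.cast_sum]
      exact Finset.sum_congr rfl fun i _ => by have := ha i; omega
    have e2 : ∑ i, ((a i : ℤ) - 1)
        = ((a i0 : ℤ) - 1) + ∑ i ∈ Finset.univ.erase i0, ((a i : ℤ) - 1) :=
      (Finset.add_sum_erase Finset.univ _ (Finset.mem_univ i0)).symm
    push_cast [e1]
    rw [e2, hm]
    have e3 : ((b - 1 : ℕ) : ℤ) = (b : ℤ) - 1 := by omega
    push_cast [e3]
    ring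
  rw [hP, hcast]
  exact hprod
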